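/- Let A be a C*-algebra, let ε > 0, λ > 0, and let a, b be self-adjoint (or positive) elements of A with ‖a - b‖ < ε. Then (a - λ - ε)₊ is Cuntz subequivalent to (b - λ)₊. -/

import Mathlib

open Filter Topology

/-- Cuntz subequivalence: `a ≾ b` iff some sequence `vₙ b vₙ*` converges to `a`. -/
def CuntzSubeq {R : Type*} [Mul R] [Star R] [TopologicalSpace R] (a b : R) : Prop :=
  ∃ v : ℕ → R, Tendsto (fun n => v n * b * star (v n)) atTop (𝓝 a)

/-- `(a - ε)₊`, via the continuous functional calculus applied to `t ↦ max (t - ε) 0`. -/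
noncomputable def cutoff {A : Type*} [NonUnitalRing A] [StarRing A] [Module ℝ A]
    [SMulCommClass ℝ A A] [IsScalarTower ℝ A A] [TopologicalSpace A]
    [NonUnitalContinuousFunctionalCalculus ℝ A (IsSelfAdjoint : A → Prop)]
    (ε : ℝ) (a : A) : A :=
  cfcₙ (fun t : ℝ => max (t - ε) 0) a

section Aux

variable {A : Type*} [NonUnitalCStarAlgebra A] [PartialOrder A] [StarOrderedRing A]

lemma sqrt_cfcn_sq {x : A} (hx : 0 ≤ x) : cfcₙ Real.sqrt x * cfcₙ Real.sqrt x = x := by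
  rw [← cfcₙ_mul ..]
  have : cfcₙ (fun t => Real.sqrt t * Real.sqrt t) x = cfcₙ (id : ℝ → ℝ) x :=
    cfcₙ_congr fun t ht => Real.mul_self_sqrt (quasispectrum_nonneg_of_nonneg x hx t ht)
  rw [this, cfcₙ_id ℝ x]

lemma approx_of_le {x y : A} (hx : 0 ≤ x) (hy : 0 ≤ y) (hxy : x ≤ y)
    {δ : ℝ} (hδ : 0 < δ) : ∃ v : A, ‖x - v * y * star v‖ ≤ δ := by
  have hyx : (0:A) ≤ y - x := sub_nonneg.mpr hxy
  have hsy : IsSelfAdjoint y := .of_nonneg hy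
  have hmpos : ∀ t : ℝ, 0 < max t 0 + δ := fun t =>
    lt_of_lt_of_le hδ (le_add_of_nonneg_left (le_max_right t 0))
  have hmc : Continuous fun t : ℝ => max t 0 + δ := by fun_prop
  have hmne : ∀ t : ℝ, Real.sqrt (max t 0 + δ) ≠ 0 :=
    fun t => ne_of_gt (Real.sqrt_pos.mpr (hmpos t))
  -- the functions
  set c : ℝ := (Real.sqrt δ)⁻¹ with hcdef
  set g : ℝ → ℝ := fun t => (Real.sqrt (max t 0 + δ))⁻¹ - c with hgdef
  set ρ : ℝ → ℝ := fun t => 1 - Real.sqrt (δ / (max t 0 + δ)) with hρdef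
  have hgc : Continuous g := ((hmc.sqrt).inv₀ hmne).sub continuous_const
  have hg0 : g 0 = 0 := by simp [hgdef, hcdef]
  have hρc : Continuous ρ :=
    continuous_const.sub ((continuous_const.div hmc fun t => ne_of_gt (hmpos t)).sqrt)
  have hρ0 : ρ 0 = 0 := by simp [hρdef, div_self (ne_of_gt hδ)]
  -- the elements
  set s : A := cfcₙ Real.sqrt x with hsdef
  set h : A := cfcₙ g y with hhdef
  set r : A := cfcₙ ρ y with hrdef
  set w : A := cfcₙ Real.sqrt (y - x) with hwdef
  have hss : s * s = x := sqrt_cfcn_sq hx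
  have hww : w * w = y - x := sqrt_cfcn_sq hyx
  have hs' : star s = s := (cfcₙ_predicate Real.sqrt x : IsSelfAdjoint s).star_eq
  have hh' : star h = h := (cfcₙ_predicate g y : IsSelfAdjoint h).star_eq
  have hr' : star r = r := (cfcₙ_predicate ρ y : IsSelfAdjoint r).star_eq
  have hw' : star w = w := (cfcₙ_predicate Real.sqrt (y - x) : IsSelfAdjoint w).star_eq
  -- handy helpers for cfcₙ arithmetic on `y`
  have key : ∀ f₁ f₂ : ℝ → ℝ, Continuous f₁ → f₁ 0 = 0 → Continuous f₂ → f₂ 0 = 0 →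
      cfcₙ (fun t => f₁ t * f₂ t) y = cfcₙ f₁ y * cfcₙ f₂ y :=
    fun f₁ f₂ h1 h10 h2 h20 => cfcₙ_mul f₁ f₂ y h1.continuousOn h10 h2.continuousOn h20
  have kadd : ∀ f₁ f₂ : ℝ → ℝ, Continuous f₁ → f₁ 0 = 0 → Continuous f₂ → f₂ 0 = 0 →
      cfcₙ (fun t => f₁ t + f₂ t) y = cfcₙ f₁ y + cfcₙ f₂ y :=
    fun f₁ f₂ h1 h10 h2 h20 => cfcₙ_add f₁ f₂ y h1.continuousOn h10 h2.continuousOn h20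
  have ksub : ∀ f₁ f₂ : ℝ → ℝ, Continuous f₁ → f₁ 0 = 0 → Continuous f₂ → f₂ 0 = 0 →
      cfcₙ (fun t => f₁ t - f₂ t) y = cfcₙ f₁ y - cfcₙ f₂ y :=
    fun f₁ f₂ h1 h10 h2 h20 => cfcₙ_sub f₁ f₂ y h1.continuousOn h10 h2.continuousOn h20
  have hid : Continuous (fun t : ℝ => t) := continuous_id
  -- building blocks
  have e1 : cfcₙ (fun t : ℝ => t * g t) y = y * h := by
    rw [key _ g hid rfl hgc hg0, cfcₙ_id' ℝ y hsy]
  have e2 : cfcₙ (fun t : ℝ => g t * (t * g t)) y = h * (y * h) := by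
    rw [key g (fun t => t * g t) hgc hg0 (hid.mul hgc) (by simp [hg0]), e1]
  have e3 : cfcₙ (fun t : ℝ => g t * t) y = h * y := by
    rw [key g _ hgc hg0 hid rfl, cfcₙ_id' ℝ y hsy]
  have e4 : cfcₙ (fun t : ℝ => c * (t * g t)) y = c • (y * h) := by
    rw [cfcₙ_const_mul c (fun t => t * g t) y (hid.mul hgc).continuousOn (by simp [hg0]), e1]
  have e5 : cfcₙ (fun t : ℝ => c * (g t * t)) y = c • (h * y) := by
    rw [cfcₙ_const_mul c (fun t => g t * t) y (hgc.mul hid).continuousOn (by simp [hg0]), e3]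
  have e6 : cfcₙ (fun t : ℝ => c ^ 2 * t) y = (c ^ 2) • y := by
    rw [cfcₙ_const_mul (c^2) _ y hid.continuousOn rfl, cfcₙ_id' ℝ y hsy]
  -- the function Ψ and its `cfcₙ` value
  set Ψ : ℝ → ℝ := fun t => (c ^ 2 * t + c * (t * g t)) + (c * (g t * t) + g t * (t * g t))
    with hΨdef
  have hΨc : Continuous Ψ := by fun_prop
  have hΨ0 : Ψ 0 = 0 := by simp [hΨdef, hg0]
  have hM : cfcₙ Ψ y = (c ^ 2) • y + c • (y * h) + (c • (h * y) + h * (y * h)) := by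
    rw [hΨdef]
    rw [kadd _ _ (by fun_prop) (by simp [hg0]) (by fun_prop) (by simp [hg0])]
    rw [kadd _ _ (by fun_prop) (mul_zero _) (by fun_prop) (by simp [hg0])]
    rw [kadd _ _ (by fun_prop) (by simp [hg0]) (by fun_prop) (by simp [hg0])]
    rw [e2, e4, e5, e6, add_assoc]
  -- Ψ agrees with φ on the quasispectrum
  set φ : ℝ → ℝ := fun t => max t 0 / (max t 0 + δ) with hφdef
  have hΨφ : cfcₙ Ψ y = cfcₙ φ y := by
    refine cfcₙ_congr fun t ht => ?_
    have ht0 : 0 ≤ t := quasispectrum_nonneg_of_nonneg y hy t ht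
    have hmax : max t 0 = t := max_eq_left ht0
    have hpos : 0 < t + δ := by linarith
    have hu : (Real.sqrt (t + δ))⁻¹ * (Real.sqrt (t + δ))⁻¹ = (t + δ)⁻¹ := by
      rw [← mul_inv, Real.mul_self_sqrt hpos.le]
    simp only [hΨdef, hφdef, hgdef, hmax]
    rw [div_eq_mul_inv, ← hu]
    ring
  -- φ in terms of r
  have hφr : cfcₙ φ y = (r + r) - r * r := by
    have : φ = fun t => (ρ t + ρ t) - ρ t * ρ t := by
      funext t
      have hq : Real.sqrt (δ / (max t 0 + δ)) * Real.sqrt (δ / (max t 0 + δ))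
          = δ / (max t 0 + δ) := Real.mul_self_sqrt (div_nonneg hδ.le (hmpos t).le)
      have hne : max t 0 + δ ≠ 0 := ne_of_gt (hmpos t)
      simp only [hφdef, hρdef]
      rw [show ∀ q : ℝ, (1 - q) + (1 - q) - (1 - q) * (1 - q) = 1 - q * q from
        fun q => by ring, hq]
      field_simp
      ring
    rw [this, ksub _ _ (by fun_prop) (by simp [hρ0]) (by fun_prop) (by simp [hρ0]),
      kadd _ _ hρc hρ0 hρc hρ0, key _ _ hρc hρ0 hρc hρ0]
  -- step 1 : v y v* = s * cfcₙ Ψ y * s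
  have hv : (c • s + s * h) * y * (c • s + h * s) = s * cfcₙ Ψ y * s := by
    rw [hM]
    simp only [mul_add, add_mul, smul_add, smul_mul_assoc, mul_smul_comm, smul_smul,
      mul_assoc, pow_two]
    abel
  have eE : star (s - r * s) * (s - r * s) = x - s * cfcₙ Ψ y * s := by
    rw [hΨφ, hφr, star_sub, star_mul, hs', hr', ← hss]
    noncomm_ring
  have eF : (s - r * s) * star (s - r * s) = x - (x * r + r * x) + r * (x * r) := by
    rw [star_sub, star_mul, hs', hr', ← hss]; noncomm_ring
  have eU : (w - r * w) * star (w - r * w)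
      = (y - x) - ((y - x) * r + r * (y - x)) + r * ((y - x) * r) := by
    rw [star_sub, star_mul, hw', hr', ← hww]; noncomm_ring
  -- the majorant D
  have f1 : cfcₙ (fun t : ℝ => t * ρ t) y = y * r := by
    rw [key _ ρ hid rfl hρc hρ0, cfcₙ_id' ℝ y hsy]
  have f2 : cfcₙ (fun t : ℝ => ρ t * t) y = r * y := by
    rw [key ρ _ hρc hρ0 hid rfl, cfcₙ_id' ℝ y hsy]
  have f3 : cfcₙ (fun t : ℝ => ρ t * (t * ρ t)) y = r * (y * r) := by
    rw [key ρ (fun t => t * ρ t) hρc hρ0 (hid.mul hρc) (by simp [hρ0]), f1]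
  set Df : ℝ → ℝ := fun t => (t - (t * ρ t + ρ t * t)) + ρ t * (t * ρ t) with hDfdef
  have hD : cfcₙ Df y = y - (y * r + r * y) + r * (y * r) := by
    rw [hDfdef, kadd _ _ (by fun_prop) (by simp [hρ0]) (by fun_prop) (by simp [hρ0]),
      ksub _ _ hid rfl (by fun_prop) (by simp [hρ0]),
      kadd _ _ (by fun_prop) (by simp [hρ0]) (by fun_prop) (by simp [hρ0]),
      f1, f2, f3, cfcₙ_id' ℝ y hsy]
  have hDnorm : ‖cfcₙ Df y‖ ≤ δ := by
    refine norm_cfcₙ_le fun t ht => ?_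
    have ht0 : 0 ≤ t := quasispectrum_nonneg_of_nonneg y hy t ht
    have hmax : max t 0 = t := max_eq_left ht0
    have hq : Real.sqrt (δ / (max t 0 + δ)) * Real.sqrt (δ / (max t 0 + δ))
        = δ / (max t 0 + δ) := Real.mul_self_sqrt (div_nonneg hδ.le (hmpos t).le)
    have hpos : 0 < t + δ := by linarith
    have hDval : Df t = δ * (t / (t + δ)) := by
      simp only [hDfdef, hρdef, hmax] at hq ⊢
      rw [show ∀ q p : ℝ, (p - (p * (1 - q) + (1 - q) * p)) + (1 - q) * (p * (1 - q))
          = p * (q * q) from fun q p => by ring, hq]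
      field_simp
    have h1 : t / (t + δ) ≤ 1 := div_le_one_of_le₀ (by linarith) hpos.le
    rw [hDval, Real.norm_eq_abs, abs_of_nonneg (by positivity)]
    calc δ * (t / (t + δ)) ≤ δ * 1 := by
          exact mul_le_mul_of_nonneg_left h1 hδ.le
      _ = δ := mul_one δ
  have hpos2 : (0:A) ≤ (y - x) - ((y - x) * r + r * (y - x)) + r * ((y - x) * r) :=
    eU ▸ mul_star_self_nonneg (w - r * w)
  have hE2 : (s - r * s) * star (s - r * s) ≤ cfcₙ Df y := by
    rw [hD, eF, ← sub_nonneg]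
    convert hpos2 using 1
    noncomm_ring
  have hnn : ‖x - s * cfcₙ Ψ y * s‖ ≤ δ := by
    rw [← eE]
    calc ‖star (s - r * s) * (s - r * s)‖ = ‖(s - r * s) * star (s - r * s)‖ := by
          rw [CStarRing.norm_star_mul_self, CStarRing.norm_self_mul_star]
      _ ≤ ‖cfcₙ Df y‖ :=
          CStarAlgebra.norm_le_norm_of_nonneg_of_le (mul_star_self_nonneg _) hE2
      _ ≤ δ := hDnorm
  refine ⟨c • s + s * h, ?_⟩
  have hstv : star (c • s + s * h) = c • s + h * s := by
    simp [star_add, star_mul, star_smul, hs', hh']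
  rw [hstv, hv]
  exact hnn

lemma cuntzSubeq_of_le_conj {x y : A} (hx : 0 ≤ x) (hy : 0 ≤ y) (q : A)
    (hxy : x ≤ q * y * star q) : CuntzSubeq x y := by
  have hy' : (0:A) ≤ q * y * star q := star_right_conjugate_nonneg hy q
  have hv : ∀ n : ℕ, ∃ v : A, ‖x - v * y * star v‖ ≤ ((n:ℝ)+1)⁻¹ := by
    intro n
    obtain ⟨v, hv⟩ := approx_of_le hx hy' hxy (δ := ((n:ℝ)+1)⁻¹) (by positivity)
    exact ⟨v * q, by simpa [mul_assoc, star_mul] using hv⟩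
  choose v hvv using hv
  refine ⟨v, ?_⟩
  rw [tendsto_iff_norm_sub_tendsto_zero]
  have hlim : Tendsto (fun n : ℕ => ((n:ℝ)+1)⁻¹) atTop (𝓝 0) := by
    simpa [one_div] using tendsto_one_div_add_atTop_nhds_zero_nat (𝕜 := ℝ)
  refine squeeze_zero (fun n => norm_nonneg _) (fun n => ?_) hlim
  rw [norm_sub_rev]
  exact hvv n

theorem aux_cutoff_cuntzSubeq (ε lam : ℝ) (hε : 0 < ε) (hlam : 0 < lam)
    (a b : A) (ha : IsSelfAdjoint a) (hb : IsSelfAdjoint b) (hab : ‖a - b‖ < ε) :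
    CuntzSubeq (cutoff (lam + ε) a) (cutoff lam b) := by
  have hab0 : (0:ℝ) ≤ ‖a - b‖ := norm_nonneg _
  set μ : ℝ := lam + ‖a - b‖ with hμdef
  set η : ℝ := lam + ε - μ with hηdef
  have hη : 0 < η := by simp only [hηdef, hμdef]; linarith
  have hden : ∀ t : ℝ, 0 < max (t - μ) η := fun t => lt_max_of_lt_right hη
  set F : ℝ → ℝ := fun t => Real.sqrt (max (t - (lam + ε)) 0 / max (t - μ) η) with hFdef
  have hFc : Continuous F := by
    apply Continuous.sqrt
    exact Continuous.div (by fun_prop) (by fun_prop) (fun t => (hden t).ne')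
  have hF0 : F 0 = 0 := by
    have h0 : max (0 - (lam + ε)) 0 = 0 := max_eq_right (by linarith)
    show Real.sqrt (max (0 - (lam + ε)) 0 / max (0 - μ) η) = 0
    rw [h0, zero_div, Real.sqrt_zero]
  set q : A := cfcₙ F a with hqdef
  have hq' : star q = q := (cfcₙ_predicate F a : IsSelfAdjoint q).star_eq
  -- identity : cutoff (lam+ε) a = q * a * q - μ • (q * q)
  have h1 : q * a * q = cfcₙ (fun t => F t * t * F t) a := by
    rw [cfcₙ_mul (fun t : ℝ => F t * t) F a ((hFc.mul continuous_id').continuousOn)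
      (by simp [hF0]) hFc.continuousOn hF0,
      cfcₙ_mul F (fun t : ℝ => t) a hFc.continuousOn hF0 continuous_id'.continuousOn rfl,
      cfcₙ_id' ℝ a ha]
  have h2 : q * q = cfcₙ (fun t => F t * F t) a := by
    rw [cfcₙ_mul F F a hFc.continuousOn hF0 hFc.continuousOn hF0]
  have hX : cutoff (lam + ε) a = q * a * q - μ • (q * q) := by
    rw [h1, h2, ← cfcₙ_const_mul μ (fun t : ℝ => F t * F t) a ((hFc.mul hFc).continuousOn)
        (by simp [hF0]),
      ← cfcₙ_sub (fun t : ℝ => F t * t * F t) (fun t : ℝ => μ * (F t * F t)) a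
        (((hFc.mul continuous_id').mul hFc).continuousOn) (by simp [hF0])
        ((continuous_const.mul (hFc.mul hFc)).continuousOn) (by simp [hF0])]
    unfold cutoff
    refine cfcₙ_congr fun t _ => Eq.symm ?_
    have hFsq : F t * F t = max (t - (lam + ε)) 0 / max (t - μ) η :=
      Real.mul_self_sqrt (div_nonneg (le_max_right _ _) (hden t).le)
    rcases le_or_gt (lam + ε) t with hcase | hcase
    · have hNmax : max (t - (lam + ε)) 0 = t - (lam + ε) := max_eq_left (by linarith)
      have hDmax : max (t - μ) η = t - μ := max_eq_left (by simp only [hηdef]; linarith)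
      have htμ : t - μ ≠ 0 := ne_of_gt (by have h := hη; rw [hηdef] at h; linarith)
      rw [show F t * t * F t - μ * (F t * F t) = (F t * F t) * (t - μ) by ring, hFsq,
        hNmax, hDmax, div_mul_cancel₀ _ htμ]
    · have hNmax : max (t - (lam + ε)) 0 = 0 := max_eq_right (by linarith)
      rw [show F t * t * F t - μ * (F t * F t) = (F t * F t) * (t - μ) by ring, hFsq, hNmax]
      simp
  -- step 1 : conjugate inequality from ‖a - b‖
  have hqa : q * (a - b) * q ≤ ‖a - b‖ • (q * q) := by
    have := CStarAlgebra.star_right_conjugate_le_norm_smul (a := q) (b := a - b) (ha.sub hb)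
    rwa [hq'] at this
  have step1 : q * a * q - μ • (q * q) ≤ q * b * q - lam • (q * q) := by
    have h' : q * a * q - q * b * q ≤ ‖a - b‖ • (q * q) := by
      rw [← sub_mul, ← mul_sub]; exact hqa
    calc q * a * q - μ • (q * q)
        = (q * a * q - q * b * q - ‖a - b‖ • (q * q)) + (q * b * q - lam • (q * q)) := by
          rw [hμdef, add_smul]; abel
      _ ≤ 0 + (q * b * q - lam • (q * q)) := add_le_add (sub_nonpos.mpr h') le_rfl
      _ = _ := zero_add _
  -- step 2 : q b q - lam q² ≤ q Y q
  set m : A := cfcₙ (fun t : ℝ => min t lam) b with hmdef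
  have hYm : cutoff lam b = b - m := by
    unfold cutoff
    have hfun : (fun t : ℝ => max (t - lam) 0) = fun t : ℝ => t - min t lam := by
      funext t
      rcases le_total t lam with h | h
      · rw [max_eq_right (by linarith), min_eq_left h]; ring
      · rw [max_eq_left (by linarith), min_eq_right h]
    rw [hfun, cfcₙ_sub (fun t : ℝ => t) (fun t : ℝ => min t lam) b
      continuous_id'.continuousOn rfl (continuous_id'.min continuous_const).continuousOn
      (min_eq_left hlam.le), cfcₙ_id' ℝ b hb]
  set j : ℝ → ℝ := fun t => Real.sqrt (max (lam - t) 0) - Real.sqrt lam with hjdef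
  have hjc : Continuous j := by fun_prop
  have hj0 : j 0 = 0 := by simp [hjdef, max_eq_left hlam.le]
  set J : A := cfcₙ j b with hJdef
  have hJ' : star J = J := (cfcₙ_predicate j b : IsSelfAdjoint J).star_eq
  have hJm : Real.sqrt lam • J + (Real.sqrt lam • J + J * J) = -m := by
    rw [hmdef, hJdef, ← cfcₙ_mul j j b hjc.continuousOn hj0 hjc.continuousOn hj0,
      ← cfcₙ_const_mul (Real.sqrt lam) j b hjc.continuousOn hj0,
      ← cfcₙ_add (fun t => Real.sqrt lam * j t) (fun t => j t * j t) b
        ((continuous_const.mul hjc).continuousOn) (by simp [hj0])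
        ((hjc.mul hjc).continuousOn) (by simp [hj0]),
      ← cfcₙ_add (fun t => Real.sqrt lam * j t)
        (fun t => Real.sqrt lam * j t + j t * j t) b
        ((continuous_const.mul hjc).continuousOn) (by simp [hj0])
        ((continuous_const.mul hjc).add (hjc.mul hjc) |>.continuousOn) (by simp [hj0]),
      ← cfcₙ_neg (fun t : ℝ => min t lam) b]
    refine cfcₙ_congr fun t _ => ?_
    have hp : Real.sqrt (max (lam - t) 0) * Real.sqrt (max (lam - t) 0) = max (lam - t) 0 :=
      Real.mul_self_sqrt (le_max_right _ _)
    have hl : Real.sqrt lam * Real.sqrt lam = lam := Real.mul_self_sqrt hlam.le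
    simp only [hjdef]
    rcases le_total t lam with h | h
    · rw [min_eq_left h]
      rw [max_eq_left (by linarith : (0:ℝ) ≤ lam - t)] at hp ⊢
      linear_combination hp - hl
    · rw [min_eq_right h]
      rw [max_eq_right (by linarith : lam - t ≤ (0:ℝ)), Real.sqrt_zero] at hp ⊢
      linear_combination -hl
  have hu : (Real.sqrt lam • q + q * J) * star (Real.sqrt lam • q + q * J)
      = lam • (q * q) - q * m * q := by
    have hst : star (Real.sqrt lam • q + q * J) = Real.sqrt lam • q + J * q := by
      simp [star_add, star_mul, star_smul, hq', hJ']
    rw [hst]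
    have expand : (Real.sqrt lam • q + q * J) * (Real.sqrt lam • q + J * q)
        = (Real.sqrt lam * Real.sqrt lam) • (q * q)
          + q * (Real.sqrt lam • J + (Real.sqrt lam • J + J * J)) * q := by
      simp only [mul_add, add_mul, smul_add, smul_mul_assoc, mul_smul_comm, smul_smul,
        mul_assoc]
      abel
    rw [expand, hJm, Real.mul_self_sqrt hlam.le]
    rw [show q * (-m) * q = -(q * m * q) by noncomm_ring]
    abel
  have step2 : q * b * q - lam • (q * q) ≤ q * (cutoff lam b) * q := by
    rw [hYm, ← sub_nonneg]
    have hrw : q * (b - m) * q - (q * b * q - lam • (q * q)) = lam • (q * q) - q * m * q := by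
      rw [mul_sub, sub_mul]; abel
    rw [hrw, ← hu]
    exact mul_star_self_nonneg _
  -- conclusion
  have hX0 : (0:A) ≤ cutoff (lam + ε) a := by
    unfold cutoff; exact cfcₙ_nonneg fun t _ => le_max_right _ _
  have hY0 : (0:A) ≤ cutoff lam b := by
    unfold cutoff; exact cfcₙ_nonneg fun t _ => le_max_right _ _
  refine cuntzSubeq_of_le_conj hX0 hY0 q ?_
  rw [hq']
  calc cutoff (lam + ε) a = q * a * q - μ • (q * q) := hX
    _ ≤ q * b * q - lam • (q * q) := step1
    _ ≤ q * (cutoff lam b) * q := step2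

end Aux

/-- If `a, b` are self-adjoint with `‖a - b‖ < ε` then `(a - λ - ε)₊ ≾ (b - λ)₊`. -/
theorem cutoff_cuntzSubeq_cutoff_of_norm_lt {A : Type*} [NonUnitalCStarAlgebra A]
    [PartialOrder A] [StarOrderedRing A] (ε lam : ℝ) (hε : 0 < ε) (hlam : 0 < lam)
    (a b : A) (ha : IsSelfAdjoint a) (hb : IsSelfAdjoint b) (hab : ‖a - b‖ < ε) :
    CuntzSubeq (cutoff (lam + ε) a) (cutoff lam b) := by
  exact aux_cutoff_cuntzSubeq ε lam hε hlam a b ha hb hab
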